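/- There exist nontrivial group homomorphisms σ₃, σ₅ : Λ^{N=1} → ℤ/2 with σ₃(h) = 0, σ₃(γ) = 1, σ₃(−1) = 0, and σ₅(h) = 1, σ₅(γ) = 1, σ₅(−1) = 1. They arise as follows: there is a ring homomorphism Λ → 𝔽₉ sending ω to 1 and y to a square root of −1 generating 𝔽₉ over 𝔽₃, and a ring homomorphism Λ → 𝔽₂₅ sending ω to a primitive third root of unity and y to 0; σ₃ and σ₅ are the composites of these with the unique surjections from the norm-one subgroups of 𝔽₉ˣ (cyclic of order 4) and 𝔽₂₅ˣ (cyclic of order 6) onto ℤ/2. -/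

import Mathlib

open Quaternion

noncomputable section

set_option linter.unnecessarySeqFocus false

/-- `x = i` in `D = ℍ[ℚ, -3, 5]`. -/
def qx : ℍ[ℚ, -3, 5] := ⟨0, 1, 0, 0⟩
/-- `y = j` in `D = ℍ[ℚ, -3, 5]`. -/
def qy : ℍ[ℚ, -3, 5] := ⟨0, 0, 1, 0⟩
/-- `ω = (−1 + x)/2`. -/
def qω : ℍ[ℚ, -3, 5] := (2 : ℚ)⁻¹ • (-1 + qx)
/-- `h = 4 + x·y`. -/
def qh : ℍ[ℚ, -3, 5] := 4 + qx * qy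
/-- `γ = 4 + 5ω² − 2y`. -/
def qγ : ℍ[ℚ, -3, 5] := 4 + 5 * qω ^ 2 - 2 * qy

/-- The maximal order `Λ = ℤ⟨ω, y⟩ ⊆ D`, the subring generated by `ω` and `y`. -/
def Λ : Subring ℍ[ℚ, -3, 5] := Subring.closure {qω, qy}

lemma qω_mem : qω ∈ Λ := Subring.subset_closure (Set.mem_insert _ _)
lemma qy_mem : qy ∈ Λ := Subring.subset_closure (Set.mem_insert_of_mem _ rfl)

lemma qx_mem : qx ∈ Λ := by
  have hx : qx = qω + qω + 1 := by ext <;> simp [qω, qx] <;> norm_num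
  rw [hx]
  exact Subring.add_mem _ (Subring.add_mem _ qω_mem qω_mem) (Subring.one_mem _)

lemma qh_mem : qh ∈ Λ := by
  have h4 : (4 : ℍ[ℚ, -3, 5]) ∈ Λ := by
    have : (4 : ℍ[ℚ, -3, 5]) = ((4 : ℕ) : ℍ[ℚ, -3, 5]) := by norm_cast
    rw [this]; exact natCast_mem Λ 4
  exact Subring.add_mem _ h4 (Subring.mul_mem _ qx_mem qy_mem)

lemma qγ_mem : qγ ∈ Λ := by
  have h4 : (4 : ℍ[ℚ, -3, 5]) ∈ Λ := by
    have : (4 : ℍ[ℚ, -3, 5]) = ((4 : ℕ) : ℍ[ℚ, -3, 5]) := by norm_cast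
    rw [this]; exact natCast_mem Λ 4
  have h5 : (5 : ℍ[ℚ, -3, 5]) ∈ Λ := by
    have : (5 : ℍ[ℚ, -3, 5]) = ((5 : ℕ) : ℍ[ℚ, -3, 5]) := by norm_cast
    rw [this]; exact natCast_mem Λ 5
  have h2 : (2 : ℍ[ℚ, -3, 5]) ∈ Λ := by
    have : (2 : ℍ[ℚ, -3, 5]) = ((2 : ℕ) : ℍ[ℚ, -3, 5]) := by norm_cast
    rw [this]; exact natCast_mem Λ 2
  exact Subring.sub_mem _
    (Subring.add_mem _ h4 (Subring.mul_mem _ h5 (by rw [pow_two]; exact Subring.mul_mem _ qω_mem qω_mem)))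
    (Subring.mul_mem _ h2 qy_mem)

lemma star_mem_Λ {a : ℍ[ℚ, -3, 5]} (ha : a ∈ Λ) : star a ∈ Λ := by
  induction ha using Subring.closure_induction with
  | mem x hx =>
      rcases hx with hx | hx
      · subst hx
        have : star qω = -1 - qω := by ext <;> simp [qω, qx] <;> norm_num
        rw [this]
        exact Subring.sub_mem _ (Subring.neg_mem _ (Subring.one_mem _)) qω_mem
      · rw [Set.mem_singleton_iff] at hx
        subst hx
        have : star qy = -qy := by ext <;> simp [qy]
        rw [this]
        exact Subring.neg_mem _ qy_mem
  | zero => simpa using Subring.zero_mem Λ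
  | one => simpa using Subring.one_mem Λ
  | add x y hx hy px py => rw [star_add]; exact Subring.add_mem _ px py
  | neg x hx px => rw [star_neg]; exact Subring.neg_mem _ px
  | mul x y hx hy px py => rw [star_mul]; exact Subring.mul_mem _ py px

/-- The norm-one units `Λ^{N=1}` of the order `Λ`, as a subgroup of the unit group of `D`. -/
def N1 : Subgroup (ℍ[ℚ, -3, 5])ˣ where
  carrier := {u | (u : ℍ[ℚ, -3, 5]) ∈ Λ ∧ (u : ℍ[ℚ, -3, 5]) * star (u : ℍ[ℚ, -3, 5]) = 1}
  one_mem' := ⟨Subring.one_mem _, by simp⟩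
  mul_mem' := by
    rintro a b ⟨haΛ, ha⟩ ⟨hbΛ, hb⟩
    refine ⟨Subring.mul_mem _ haΛ hbΛ, ?_⟩
    rw [Units.val_mul, star_mul, mul_assoc, ← mul_assoc (b : ℍ[ℚ, -3, 5]), hb, one_mul, ha]
  inv_mem' := by
    rintro u ⟨huΛ, hu⟩
    have hinv : ((u⁻¹ : (ℍ[ℚ, -3, 5])ˣ) : ℍ[ℚ, -3, 5]) = star (u : ℍ[ℚ, -3, 5]) :=
      Units.inv_eq_of_mul_eq_one_right hu
    refine ⟨by rw [hinv]; exact star_mem_Λ huΛ, ?_⟩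
    rw [hinv, star_star, ← hinv, Units.inv_mul]

lemma qω_norm : qω * star qω = 1 := by ext <;> simp [qω, qx] <;> norm_num
lemma qω_norm' : star qω * qω = 1 := by ext <;> simp [qω, qx] <;> norm_num
lemma qh_norm : qh * star qh = 1 := by
  have h4 : ((4 : ℚ) : ℍ[ℚ, -3, 5]) = 4 := by norm_cast
  ext <;> simp [qh, qx, qy, ← h4, - QuaternionAlgebra.coe_ofNat] <;> norm_num
lemma qh_norm' : star qh * qh = 1 := by
  have h4 : ((4 : ℚ) : ℍ[ℚ, -3, 5]) = 4 := by norm_cast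
  ext <;> simp [qh, qx, qy, ← h4, - QuaternionAlgebra.coe_ofNat] <;> norm_num
lemma qγ_norm : qγ * star qγ = 1 := by
  have h4 : ((4 : ℚ) : ℍ[ℚ, -3, 5]) = 4 := by norm_cast
  have h5 : ((5 : ℚ) : ℍ[ℚ, -3, 5]) = 5 := by norm_cast
  have h2 : ((2 : ℚ) : ℍ[ℚ, -3, 5]) = 2 := by norm_cast
  ext <;> simp [qγ, qω, qx, qy, ← h4, ← h5, ← h2, pow_two, - QuaternionAlgebra.coe_ofNat] <;> norm_num
lemma qγ_norm' : star qγ * qγ = 1 := by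
  have h4 : ((4 : ℚ) : ℍ[ℚ, -3, 5]) = 4 := by norm_cast
  have h5 : ((5 : ℚ) : ℍ[ℚ, -3, 5]) = 5 := by norm_cast
  have h2 : ((2 : ℚ) : ℍ[ℚ, -3, 5]) = 2 := by norm_cast
  ext <;> simp [qγ, qω, qx, qy, ← h4, ← h5, ← h2, pow_two, - QuaternionAlgebra.coe_ofNat] <;> norm_num

/-- `ω` as an element of `Λ^{N=1}`. -/
def nω : N1 := ⟨⟨qω, star qω, qω_norm, qω_norm'⟩, qω_mem, qω_norm⟩
/-- `h = 4 + xy` as an element of `Λ^{N=1}`. -/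
def nh : N1 := ⟨⟨qh, star qh, qh_norm, qh_norm'⟩, qh_mem, qh_norm⟩
/-- `γ = 4 + 5ω² − 2y` as an element of `Λ^{N=1}`. -/
def nγ : N1 := ⟨⟨qγ, star qγ, qγ_norm, qγ_norm'⟩, qγ_mem, qγ_norm⟩
/-- `−1` as an element of `Λ^{N=1}`. -/
def negOne : N1 := ⟨-1, by
  refine ⟨?_, by simp⟩
  show ((-1 : (ℍ[ℚ, -3, 5])ˣ) : ℍ[ℚ, -3, 5]) ∈ Λ
  simp [Subring.neg_mem, Subring.one_mem]⟩

instance : Fact (Nat.Prime 3) := ⟨by norm_num⟩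
instance : Fact (Nat.Prime 5) := ⟨by norm_num⟩


/-! ### Auxiliary machinery for Statement 12 -/

open scoped Classical

lemma lattice_coords {q : ℍ[ℚ, -3, 5]} (hq : q ∈ Λ) :
    ∃ α β γ δ : ℤ, q.re = (α : ℚ) - β / 2 ∧ q.imI = (β : ℚ) / 2 ∧
      q.imJ = (γ : ℚ) - δ / 2 ∧ q.imK = (δ : ℚ) / 2 := by
  induction hq using Subring.closure_induction with
  | mem x hx =>
      rcases hx with hx | hx
      · subst hx
        exact ⟨0, 1, 0, 0, by norm_num [qω, qx], by norm_num [qω, qx],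
          by norm_num [qω, qx], by norm_num [qω, qx]⟩
      · rw [Set.mem_singleton_iff] at hx; subst hx
        exact ⟨0, 0, 1, 0, by norm_num [qy], by norm_num [qy], by norm_num [qy], by norm_num [qy]⟩
  | zero => exact ⟨0, 0, 0, 0, by norm_num, by norm_num, by norm_num, by norm_num⟩
  | one => exact ⟨1, 0, 0, 0, by norm_num, by norm_num, by norm_num, by norm_num⟩
  | add x y hx hy px py =>
      obtain ⟨α₁, β₁, γ₁, δ₁, e1, e2, e3, e4⟩ := px
      obtain ⟨α₂, β₂, γ₂, δ₂, g1, g2, g3, g4⟩ := py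
      exact ⟨α₁ + α₂, β₁ + β₂, γ₁ + γ₂, δ₁ + δ₂,
        by rw [QuaternionAlgebra.re_add, e1, g1]; push_cast; ring,
        by rw [QuaternionAlgebra.imI_add, e2, g2]; push_cast; ring,
        by rw [QuaternionAlgebra.imJ_add, e3, g3]; push_cast; ring,
        by rw [QuaternionAlgebra.imK_add, e4, g4]; push_cast; ring⟩
  | neg x hx px =>
      obtain ⟨α₁, β₁, γ₁, δ₁, e1, e2, e3, e4⟩ := px
      exact ⟨-α₁, -β₁, -γ₁, -δ₁,
        by rw [QuaternionAlgebra.re_neg, e1]; push_cast; ring,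
        by rw [QuaternionAlgebra.imI_neg, e2]; push_cast; ring,
        by rw [QuaternionAlgebra.imJ_neg, e3]; push_cast; ring,
        by rw [QuaternionAlgebra.imK_neg, e4]; push_cast; ring⟩
  | mul x y hx hy px py =>
      obtain ⟨α₁, β₁, γ₁, δ₁, e1, e2, e3, e4⟩ := px
      obtain ⟨α₂, β₂, γ₂, δ₂, g1, g2, g3, g4⟩ := py
      refine ⟨5*δ₁*δ₂ - 5*γ₁*δ₂ + 5*γ₁*γ₂ - β₁*β₂ + α₁*α₂,
        5*δ₁*γ₂ - 5*γ₁*δ₂ - β₁*β₂ + β₁*α₂ + α₁*β₂,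
        δ₁*β₂ - γ₁*β₂ + γ₁*α₂ - β₁*δ₂ + α₁*γ₂,
        δ₁*α₂ - γ₁*β₂ - β₁*δ₂ + β₁*γ₂ + α₁*δ₂, ?_, ?_, ?_, ?_⟩
      · rw [QuaternionAlgebra.re_mul, e1, e2, e3, e4, g1, g2, g3, g4]; push_cast; ring
      · rw [QuaternionAlgebra.imI_mul, e1, e2, e3, e4, g1, g2, g3, g4]; push_cast; ring
      · rw [QuaternionAlgebra.imJ_mul, e1, e2, e3, e4, g1, g2, g3, g4]; push_cast; ring
      · rw [QuaternionAlgebra.imK_mul, e1, e2, e3, e4, g1, g2, g3, g4]; push_cast; ring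

/-- The coordinate formula for the mod-3 reduction map `Λ → 𝔽₉`, `ω ↦ 1`, `y ↦ s`. -/
def f3 (s : GaloisField 3 2) (q : ℍ[ℚ, -3, 5]) : GaloisField 3 2 :=
  ((q.re + 3 * q.imI : ℚ) : GaloisField 3 2) + ((q.imJ + 3 * q.imK : ℚ) : GaloisField 3 2) * s

lemma f3_eq (s : GaloisField 3 2) {q : ℍ[ℚ, -3, 5]} {α β γ δ : ℤ}
    (h1 : q.re = (α : ℚ) - β / 2) (h2 : q.imI = (β : ℚ) / 2)
    (h3 : q.imJ = (γ : ℚ) - δ / 2) (h4 : q.imK = (δ : ℚ) / 2) :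
    f3 s q = ((α + β : ℤ) : GaloisField 3 2) + ((γ + δ : ℤ) : GaloisField 3 2) * s := by
  simp only [f3, h1, h2, h3, h4]
  rw [show ((α : ℚ) - β / 2 + 3 * ((β : ℚ) / 2)) = ((α + β : ℤ) : ℚ) by push_cast; ring,
    show ((γ : ℚ) - δ / 2 + 3 * ((δ : ℚ) / 2)) = ((γ + δ : ℤ) : ℚ) by push_cast; ring,
    Rat.cast_intCast, Rat.cast_intCast]

lemma char3 : (3 : GaloisField 3 2) = 0 := by
  exact_mod_cast CharP.cast_eq_zero (GaloisField 3 2) 3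

lemma f3_add (s : GaloisField 3 2) {q1 q2 : ℍ[ℚ, -3, 5]} (h1 : q1 ∈ Λ) (h2 : q2 ∈ Λ) :
    f3 s (q1 + q2) = f3 s q1 + f3 s q2 := by
  obtain ⟨α₁, β₁, γ₁, δ₁, e1, e2, e3, e4⟩ := lattice_coords h1
  obtain ⟨α₂, β₂, γ₂, δ₂, g1, g2, g3, g4⟩ := lattice_coords h2
  rw [f3_eq s e1 e2 e3 e4, f3_eq s g1 g2 g3 g4,
    f3_eq s (q := q1 + q2) (α := α₁ + α₂) (β := β₁ + β₂) (γ := γ₁ + γ₂) (δ := δ₁ + δ₂)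
      (by rw [QuaternionAlgebra.re_add, e1, g1]; push_cast; ring)
      (by rw [QuaternionAlgebra.imI_add, e2, g2]; push_cast; ring)
      (by rw [QuaternionAlgebra.imJ_add, e3, g3]; push_cast; ring)
      (by rw [QuaternionAlgebra.imK_add, e4, g4]; push_cast; ring)]
  push_cast
  ring

lemma f3_mul (s : GaloisField 3 2) (hs : s ^ 2 = -1) {q1 q2 : ℍ[ℚ, -3, 5]}
    (h1 : q1 ∈ Λ) (h2 : q2 ∈ Λ) : f3 s (q1 * q2) = f3 s q1 * f3 s q2 := by
  obtain ⟨α₁, β₁, γ₁, δ₁, e1, e2, e3, e4⟩ := lattice_coords h1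
  obtain ⟨α₂, β₂, γ₂, δ₂, g1, g2, g3, g4⟩ := lattice_coords h2
  rw [f3_eq s e1 e2 e3 e4, f3_eq s g1 g2 g3 g4,
    f3_eq s (q := q1 * q2)
      (α := 5*δ₁*δ₂ - 5*γ₁*δ₂ + 5*γ₁*γ₂ - β₁*β₂ + α₁*α₂)
      (β := 5*δ₁*γ₂ - 5*γ₁*δ₂ - β₁*β₂ + β₁*α₂ + α₁*β₂)
      (γ := δ₁*β₂ - γ₁*β₂ + γ₁*α₂ - β₁*δ₂ + α₁*γ₂)
      (δ := δ₁*α₂ - γ₁*β₂ - β₁*δ₂ + β₁*γ₂ + α₁*δ₂)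
      (by rw [QuaternionAlgebra.re_mul, e1, e2, e3, e4, g1, g2, g3, g4]; push_cast; ring)
      (by rw [QuaternionAlgebra.imI_mul, e1, e2, e3, e4, g1, g2, g3, g4]; push_cast; ring)
      (by rw [QuaternionAlgebra.imJ_mul, e1, e2, e3, e4, g1, g2, g3, g4]; push_cast; ring)
      (by rw [QuaternionAlgebra.imK_mul, e1, e2, e3, e4, g1, g2, g3, g4]; push_cast; ring)]
  linear_combination (norm := (push_cast; ring1))
    (((2*δ₁*δ₂ + 2*δ₁*γ₂ - 3*γ₁*δ₂ + 2*γ₁*γ₂ - β₁*β₂ : ℤ) : GaloisField 3 2)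
      + ((-(γ₁*β₂) - β₁*δ₂ : ℤ) : GaloisField 3 2) * s) * char3
    - (((γ₁ + δ₁ : ℤ) : GaloisField 3 2) * ((γ₂ + δ₂ : ℤ) : GaloisField 3 2)) * hs

lemma f3_one (s : GaloisField 3 2) : f3 s 1 = 1 := by simp [f3]

lemma f3_zero (s : GaloisField 3 2) : f3 s 0 = 0 := by simp [f3]

lemma f3_neg (s : GaloisField 3 2) (q : ℍ[ℚ, -3, 5]) : f3 s (-q) = -f3 s q := by
  simp only [f3, QuaternionAlgebra.re_neg, QuaternionAlgebra.imI_neg,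
    QuaternionAlgebra.imJ_neg, QuaternionAlgebra.imK_neg]
  rw [show (-q.re + 3 * -q.imI : ℚ) = -(q.re + 3 * q.imI) from by ring,
    show (-q.imJ + 3 * -q.imK : ℚ) = -(q.imJ + 3 * q.imK) from by ring,
    Rat.cast_neg, Rat.cast_neg]
  ring

lemma qω_re : qω.re = (-1) / 2 := by norm_num [qω, qx]
lemma qω_imI : qω.imI = 1 / 2 := by norm_num [qω, qx]
lemma qω_imJ : qω.imJ = 0 := by norm_num [qω, qx]
lemma qω_imK : qω.imK = 0 := by norm_num [qω, qx]

lemma f3_qω (s : GaloisField 3 2) : f3 s qω = 1 := by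
  rw [f3_eq s (α := 0) (β := 1) (γ := 0) (δ := 0)
    (by rw [qω_re]; norm_num) (by rw [qω_imI]; norm_num)
    (by rw [qω_imJ]; norm_num) (by rw [qω_imK]; norm_num)]
  norm_num

lemma f3_qy (s : GaloisField 3 2) : f3 s qy = s := by
  rw [f3_eq s (α := 0) (β := 0) (γ := 1) (δ := 0)
    (by norm_num [qy]) (by norm_num [qy]) (by norm_num [qy]) (by norm_num [qy])]
  norm_num

lemma qh_re : qh.re = 4 := by
  have h4 : ((4 : ℚ) : ℍ[ℚ, -3, 5]) = 4 := by norm_cast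
  simp [qh, qx, qy, ← h4, - QuaternionAlgebra.coe_ofNat]
lemma qh_imI : qh.imI = 0 := by
  have h4 : ((4 : ℚ) : ℍ[ℚ, -3, 5]) = 4 := by norm_cast
  simp [qh, qx, qy, ← h4, - QuaternionAlgebra.coe_ofNat]
lemma qh_imJ : qh.imJ = 0 := by
  have h4 : ((4 : ℚ) : ℍ[ℚ, -3, 5]) = 4 := by norm_cast
  simp [qh, qx, qy, ← h4, - QuaternionAlgebra.coe_ofNat]
lemma qh_imK : qh.imK = 1 := by
  have h4 : ((4 : ℚ) : ℍ[ℚ, -3, 5]) = 4 := by norm_cast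
  simp [qh, qx, qy, ← h4, - QuaternionAlgebra.coe_ofNat]

lemma f3_qh (s : GaloisField 3 2) : f3 s qh = 1 := by
  rw [f3_eq s (α := 4) (β := 0) (γ := 1) (δ := 2)
    (by rw [qh_re]; norm_num) (by rw [qh_imI]; norm_num)
    (by rw [qh_imJ]; norm_num) (by rw [qh_imK]; norm_num)]
  linear_combination (norm := (push_cast; ring1)) (1 + s) * char3

lemma qγ_re : qγ.re = 3 / 2 := by
  have h4 : ((4 : ℚ) : ℍ[ℚ, -3, 5]) = 4 := by norm_cast
  have h5 : ((5 : ℚ) : ℍ[ℚ, -3, 5]) = 5 := by norm_cast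
  have h2 : ((2 : ℚ) : ℍ[ℚ, -3, 5]) = 2 := by norm_cast
  simp [qγ, qω, qx, qy, ← h4, ← h5, ← h2, pow_two, - QuaternionAlgebra.coe_ofNat]; norm_num
lemma qγ_imI : qγ.imI = (-5) / 2 := by
  have h4 : ((4 : ℚ) : ℍ[ℚ, -3, 5]) = 4 := by norm_cast
  have h5 : ((5 : ℚ) : ℍ[ℚ, -3, 5]) = 5 := by norm_cast
  have h2 : ((2 : ℚ) : ℍ[ℚ, -3, 5]) = 2 := by norm_cast
  simp [qγ, qω, qx, qy, ← h4, ← h5, ← h2, pow_two, - QuaternionAlgebra.coe_ofNat]; norm_num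
lemma qγ_imJ : qγ.imJ = -2 := by
  have h4 : ((4 : ℚ) : ℍ[ℚ, -3, 5]) = 4 := by norm_cast
  have h5 : ((5 : ℚ) : ℍ[ℚ, -3, 5]) = 5 := by norm_cast
  have h2 : ((2 : ℚ) : ℍ[ℚ, -3, 5]) = 2 := by norm_cast
  simp [qγ, qω, qx, qy, ← h4, ← h5, ← h2, pow_two, - QuaternionAlgebra.coe_ofNat]
lemma qγ_imK : qγ.imK = 0 := by
  have h4 : ((4 : ℚ) : ℍ[ℚ, -3, 5]) = 4 := by norm_cast
  have h5 : ((5 : ℚ) : ℍ[ℚ, -3, 5]) = 5 := by norm_cast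
  have h2 : ((2 : ℚ) : ℍ[ℚ, -3, 5]) = 2 := by norm_cast
  simp [qγ, qω, qx, qy, ← h4, ← h5, ← h2, pow_two, - QuaternionAlgebra.coe_ofNat]

lemma f3_qγ (s : GaloisField 3 2) : f3 s qγ = s := by
  rw [f3_eq s (α := -1) (β := -5) (γ := -2) (δ := 0)
    (by rw [qγ_re]; norm_num) (by rw [qγ_imI]; norm_num)
    (by rw [qγ_imJ]; norm_num) (by rw [qγ_imK]; norm_num)]
  linear_combination (norm := (push_cast; ring1)) (-2 - s) * char3

lemma f3_star (s : GaloisField 3 2) (hs : s ^ 2 = -1) {q : ℍ[ℚ, -3, 5]} (hq : q ∈ Λ) :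
    f3 s (star q) = (f3 s q) ^ 3 := by
  induction hq using Subring.closure_induction with
  | mem x hx =>
      rcases hx with hx | hx
      · subst hx
        rw [f3_qω,
          f3_eq s (α := -1) (β := -1) (γ := 0) (δ := 0)
            (by rw [QuaternionAlgebra.re_star, qω_re]; norm_num)
            (by rw [QuaternionAlgebra.imI_star, qω_imI]; norm_num)
            (by rw [QuaternionAlgebra.imJ_star, qω_imJ]; norm_num)
            (by rw [QuaternionAlgebra.imK_star, qω_imK]; norm_num)]
        linear_combination (norm := (push_cast; ring1)) -char3
      · rw [Set.mem_singleton_iff] at hx; subst hx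
        rw [f3_qy,
          f3_eq s (α := 0) (β := 0) (γ := -1) (δ := 0)
            (by rw [QuaternionAlgebra.re_star]; norm_num [qy])
            (by rw [QuaternionAlgebra.imI_star]; norm_num [qy])
            (by rw [QuaternionAlgebra.imJ_star]; norm_num [qy])
            (by rw [QuaternionAlgebra.imK_star]; norm_num [qy])]
        linear_combination (norm := (push_cast; ring1)) (-s) * hs
  | zero => rw [star_zero, f3_zero]; ring
  | one => rw [star_one, f3_one]; ring
  | add x y hx hy px py =>
      rw [star_add, f3_add s (star_mem_Λ hx) (star_mem_Λ hy), px, py,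
        f3_add s hx hy, add_pow_char _ _ 3]
  | neg x hx px => rw [star_neg, f3_neg, px, f3_neg]; ring
  | mul x y hx hy px py =>
      rw [star_mul, f3_mul s hs (star_mem_Λ hy) (star_mem_Λ hx), px, py, f3_mul s hs hx hy]
      ring

lemma f3_norm (s : GaloisField 3 2) (hs : s ^ 2 = -1) {q : ℍ[ℚ, -3, 5]}
    (hΛ : q ∈ Λ) (hn : q * star q = 1) : (f3 s q) ^ 4 = 1 := by
  have h := f3_mul s hs hΛ (star_mem_Λ hΛ)
  rw [hn, f3_one, f3_star s hs hΛ] at h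
  calc (f3 s q) ^ 4 = f3 s q * (f3 s q) ^ 3 := by ring
  _ = 1 := h.symm

/-- The coordinate formula for the mod-5 reduction map `Λ → 𝔽₂₅`, `ω ↦ t`, `y ↦ 0`. -/
def f5 (t : GaloisField 5 2) (q : ℍ[ℚ, -3, 5]) : GaloisField 5 2 :=
  ((q.re + q.imI : ℚ) : GaloisField 5 2) + ((2 * q.imI : ℚ) : GaloisField 5 2) * t

lemma f5_eq (t : GaloisField 5 2) {q : ℍ[ℚ, -3, 5]} {α β γ δ : ℤ}
    (h1 : q.re = (α : ℚ) - β / 2) (h2 : q.imI = (β : ℚ) / 2)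
    (h3 : q.imJ = (γ : ℚ) - δ / 2) (h4 : q.imK = (δ : ℚ) / 2) :
    f5 t q = ((α : ℤ) : GaloisField 5 2) + ((β : ℤ) : GaloisField 5 2) * t := by
  simp only [f5, h1, h2]
  rw [show ((α : ℚ) - β / 2 + (β : ℚ) / 2) = ((α : ℤ) : ℚ) by push_cast; ring,
    show (2 * ((β : ℚ) / 2)) = ((β : ℤ) : ℚ) by push_cast; ring,
    Rat.cast_intCast, Rat.cast_intCast]

lemma char5 : (5 : GaloisField 5 2) = 0 := by
  exact_mod_cast CharP.cast_eq_zero (GaloisField 5 2) 5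

lemma f5_add (t : GaloisField 5 2) {q1 q2 : ℍ[ℚ, -3, 5]} (h1 : q1 ∈ Λ) (h2 : q2 ∈ Λ) :
    f5 t (q1 + q2) = f5 t q1 + f5 t q2 := by
  obtain ⟨α₁, β₁, γ₁, δ₁, e1, e2, e3, e4⟩ := lattice_coords h1
  obtain ⟨α₂, β₂, γ₂, δ₂, g1, g2, g3, g4⟩ := lattice_coords h2
  rw [f5_eq t e1 e2 e3 e4, f5_eq t g1 g2 g3 g4,
    f5_eq t (q := q1 + q2) (α := α₁ + α₂) (β := β₁ + β₂) (γ := γ₁ + γ₂) (δ := δ₁ + δ₂)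
      (by rw [QuaternionAlgebra.re_add, e1, g1]; push_cast; ring)
      (by rw [QuaternionAlgebra.imI_add, e2, g2]; push_cast; ring)
      (by rw [QuaternionAlgebra.imJ_add, e3, g3]; push_cast; ring)
      (by rw [QuaternionAlgebra.imK_add, e4, g4]; push_cast; ring)]
  push_cast
  ring

lemma f5_mul (t : GaloisField 5 2) (ht : t ^ 2 = -1 - t) {q1 q2 : ℍ[ℚ, -3, 5]}
    (h1 : q1 ∈ Λ) (h2 : q2 ∈ Λ) : f5 t (q1 * q2) = f5 t q1 * f5 t q2 := by
  obtain ⟨α₁, β₁, γ₁, δ₁, e1, e2, e3, e4⟩ := lattice_coords h1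
  obtain ⟨α₂, β₂, γ₂, δ₂, g1, g2, g3, g4⟩ := lattice_coords h2
  rw [f5_eq t e1 e2 e3 e4, f5_eq t g1 g2 g3 g4,
    f5_eq t (q := q1 * q2)
      (α := 5*δ₁*δ₂ - 5*γ₁*δ₂ + 5*γ₁*γ₂ - β₁*β₂ + α₁*α₂)
      (β := 5*δ₁*γ₂ - 5*γ₁*δ₂ - β₁*β₂ + β₁*α₂ + α₁*β₂)
      (γ := δ₁*β₂ - γ₁*β₂ + γ₁*α₂ - β₁*δ₂ + α₁*γ₂)
      (δ := δ₁*α₂ - γ₁*β₂ - β₁*δ₂ + β₁*γ₂ + α₁*δ₂)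
      (by rw [QuaternionAlgebra.re_mul, e1, e2, e3, e4, g1, g2, g3, g4]; push_cast; ring)
      (by rw [QuaternionAlgebra.imI_mul, e1, e2, e3, e4, g1, g2, g3, g4]; push_cast; ring)
      (by rw [QuaternionAlgebra.imJ_mul, e1, e2, e3, e4, g1, g2, g3, g4]; push_cast; ring)
      (by rw [QuaternionAlgebra.imK_mul, e1, e2, e3, e4, g1, g2, g3, g4]; push_cast; ring)]
  linear_combination (norm := (push_cast; ring1))
    (((δ₁*δ₂ - γ₁*δ₂ + γ₁*γ₂ : ℤ) : GaloisField 5 2)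
      + ((δ₁*γ₂ - γ₁*δ₂ : ℤ) : GaloisField 5 2) * t) * char5
    - (((β₁ : ℤ) : GaloisField 5 2) * ((β₂ : ℤ) : GaloisField 5 2)) * ht

lemma f5_one (t : GaloisField 5 2) : f5 t 1 = 1 := by simp [f5]
lemma f5_zero (t : GaloisField 5 2) : f5 t 0 = 0 := by simp [f5]

lemma f5_neg (t : GaloisField 5 2) (q : ℍ[ℚ, -3, 5]) : f5 t (-q) = -f5 t q := by
  simp only [f5, QuaternionAlgebra.re_neg, QuaternionAlgebra.imI_neg]
  rw [show (-q.re + -q.imI : ℚ) = -(q.re + q.imI) from by ring,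
    show (2 * -q.imI : ℚ) = -(2 * q.imI) from by ring, Rat.cast_neg, Rat.cast_neg]
  ring

lemma f5_qω (t : GaloisField 5 2) : f5 t qω = t := by
  rw [f5_eq t (α := 0) (β := 1) (γ := 0) (δ := 0)
    (by rw [qω_re]; norm_num) (by rw [qω_imI]; norm_num)
    (by rw [qω_imJ]; norm_num) (by rw [qω_imK]; norm_num)]
  norm_num

lemma f5_qy (t : GaloisField 5 2) : f5 t qy = 0 := by
  rw [f5_eq t (α := 0) (β := 0) (γ := 1) (δ := 0)
    (by norm_num [qy]) (by norm_num [qy]) (by norm_num [qy]) (by norm_num [qy])]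
  norm_num

lemma f5_qh (t : GaloisField 5 2) : f5 t qh = 4 := by
  rw [f5_eq t (α := 4) (β := 0) (γ := 1) (δ := 2)
    (by rw [qh_re]; norm_num) (by rw [qh_imI]; norm_num)
    (by rw [qh_imJ]; norm_num) (by rw [qh_imK]; norm_num)]
  norm_num

lemma f5_qγ (t : GaloisField 5 2) : f5 t qγ = -1 := by
  rw [f5_eq t (α := -1) (β := -5) (γ := -2) (δ := 0)
    (by rw [qγ_re]; norm_num) (by rw [qγ_imI]; norm_num)
    (by rw [qγ_imJ]; norm_num) (by rw [qγ_imK]; norm_num)]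
  linear_combination (norm := (push_cast; ring1)) (-t) * char5

lemma f5_star (t : GaloisField 5 2) (ht : t ^ 2 = -1 - t) {q : ℍ[ℚ, -3, 5]} (hq : q ∈ Λ) :
    f5 t (star q) = (f5 t q) ^ 5 := by
  have ht3 : t ^ 3 = 1 := by linear_combination (t - 1) * ht
  induction hq using Subring.closure_induction with
  | mem x hx =>
      rcases hx with hx | hx
      · subst hx
        rw [f5_qω,
          f5_eq t (α := -1) (β := -1) (γ := 0) (δ := 0)
            (by rw [QuaternionAlgebra.re_star, qω_re]; norm_num)
            (by rw [QuaternionAlgebra.imI_star, qω_imI]; norm_num)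
            (by rw [QuaternionAlgebra.imJ_star, qω_imJ]; norm_num)
            (by rw [QuaternionAlgebra.imK_star, qω_imK]; norm_num)]
        have h5 : t ^ 5 = t ^ 2 := by
          calc t ^ 5 = t ^ 2 * t ^ 3 := by ring
          _ = t ^ 2 := by rw [ht3, mul_one]
        rw [h5, ht]
        push_cast
        ring
      · rw [Set.mem_singleton_iff] at hx; subst hx
        rw [f5_qy,
          f5_eq t (α := 0) (β := 0) (γ := -1) (δ := 0)
            (by rw [QuaternionAlgebra.re_star]; norm_num [qy])
            (by rw [QuaternionAlgebra.imI_star]; norm_num [qy])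
            (by rw [QuaternionAlgebra.imJ_star]; norm_num [qy])
            (by rw [QuaternionAlgebra.imK_star]; norm_num [qy])]
        norm_num
  | zero => rw [star_zero, f5_zero]; ring
  | one => rw [star_one, f5_one]; ring
  | add x y hx hy px py =>
      rw [star_add, f5_add t (star_mem_Λ hx) (star_mem_Λ hy), px, py,
        f5_add t hx hy, add_pow_char _ _ 5]
  | neg x hx px => rw [star_neg, f5_neg, px, f5_neg]; ring
  | mul x y hx hy px py =>
      rw [star_mul, f5_mul t ht (star_mem_Λ hy) (star_mem_Λ hx), px, py, f5_mul t ht hx hy]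
      ring

lemma f5_norm (t : GaloisField 5 2) (ht : t ^ 2 = -1 - t) {q : ℍ[ℚ, -3, 5]}
    (hΛ : q ∈ Λ) (hn : q * star q = 1) : (f5 t q) ^ 6 = 1 := by
  have h := f5_mul t ht hΛ (star_mem_Λ hΛ)
  rw [hn, f5_one, f5_star t ht hΛ] at h
  calc (f5 t q) ^ 6 = f5 t q * (f5 t q) ^ 5 := by ring
  _ = 1 := h.symm

lemma sign_mul_aux {K : Type*} [Field K] (hne : (-1 : K) ≠ 1) {a b : K}
    (ha : a * a = 1) (hb : b * b = 1) :
    (if a * b = 1 then Multiplicative.ofAdd (0 : ZMod 2) else Multiplicative.ofAdd 1) =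
    (if a = 1 then Multiplicative.ofAdd (0 : ZMod 2) else Multiplicative.ofAdd 1) *
    (if b = 1 then Multiplicative.ofAdd (0 : ZMod 2) else Multiplicative.ofAdd 1) := by
  rcases mul_self_eq_one_iff.mp ha with h | h <;> rcases mul_self_eq_one_iff.mp hb with h' | h' <;>
    subst h <;> subst h' <;> simp [hne] <;> decide

lemma N1_val_mem (u : N1) : ((u : (ℍ[ℚ, -3, 5])ˣ) : ℍ[ℚ, -3, 5]) ∈ Λ := u.2.1

lemma N1_val_norm (u : N1) :
    ((u : (ℍ[ℚ, -3, 5])ˣ) : ℍ[ℚ, -3, 5]) * star ((u : (ℍ[ℚ, -3, 5])ˣ) : ℍ[ℚ, -3, 5]) = 1 :=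
  u.2.2

/-- There exist nontrivial group homomorphisms
`σ₃, σ₅ : Λ^{N=1} → ℤ/2` with `σ₃(h) = 0`, `σ₃(γ) = 1`, `σ₃(−1) = 0` and `σ₅(h) = 1`,
`σ₅(γ) = 1`, `σ₅(−1) = 1`.  They arise from a ring homomorphism `Λ → 𝔽₉` sending `ω` to
`1` and `y` to a square root of `−1` generating `𝔽₉` over `𝔽₃`, and a ring homomorphism
`Λ → 𝔽₂₅` sending `ω` to a primitive third root of unity and `y` to `0`, composed with
the unique surjections of the norm-one subgroups of `𝔽₉ˣ` and `𝔽₂₅ˣ` onto `ℤ/2`. -/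
theorem exists_level_three_five_cover_homomorphisms :
    (∃ ρ₃ : Λ →+* GaloisField 3 2,
      ρ₃ ⟨qω, qω_mem⟩ = 1 ∧ (ρ₃ ⟨qy, qy_mem⟩) ^ 2 = -1 ∧
      Algebra.adjoin (ZMod 3) ({ρ₃ ⟨qy, qy_mem⟩} : Set (GaloisField 3 2)) = ⊤) ∧
    (∃ ρ₅ : Λ →+* GaloisField 5 2,
      IsPrimitiveRoot (ρ₅ ⟨qω, qω_mem⟩) 3 ∧ ρ₅ ⟨qy, qy_mem⟩ = 0) ∧
    (∃ σ₃ : N1 →* Multiplicative (ZMod 2),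
      σ₃ nh = Multiplicative.ofAdd (0 : ZMod 2) ∧
      σ₃ nγ = Multiplicative.ofAdd (1 : ZMod 2) ∧
      σ₃ negOne = Multiplicative.ofAdd (0 : ZMod 2) ∧ σ₃ ≠ 1) ∧
    (∃ σ₅ : N1 →* Multiplicative (ZMod 2),
      σ₅ nh = Multiplicative.ofAdd (1 : ZMod 2) ∧
      σ₅ nγ = Multiplicative.ofAdd (1 : ZMod 2) ∧
      σ₅ negOne = Multiplicative.ofAdd (1 : ZMod 2) ∧ σ₅ ≠ 1) := by
  classical
  -- ### the field 𝔽₉ and the square root of −1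
  haveI : Fintype (GaloisField 3 2) := Fintype.ofFinite _
  have hcard9 : Fintype.card (GaloisField 3 2) = 9 := by
    rw [← Nat.card_eq_fintype_card, GaloisField.card 3 2 (by norm_num)]
    norm_num
  obtain ⟨s, hs'⟩ : IsSquare (-1 : GaloisField 3 2) :=
    FiniteField.isSquare_neg_one_iff.mpr (by rw [hcard9]; norm_num)
  have hs : s ^ 2 = -1 := by rw [pow_two]; exact hs'.symm
  have hne9 : (-1 : GaloisField 3 2) ≠ 1 := by
    intro h
    have h2 : ((2 : ℕ) : GaloisField 3 2) = 0 := by push_cast; linear_combination -h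
    rw [CharP.cast_eq_zero_iff (GaloisField 3 2) 3] at h2
    norm_num at h2
  -- ### the field 𝔽₂₅ and the primitive cube root of unity
  haveI : Fintype (GaloisField 5 2) := Fintype.ofFinite _
  have hcard25 : Fintype.card (GaloisField 5 2) = 25 := by
    rw [← Nat.card_eq_fintype_card, GaloisField.card 5 2 (by norm_num)]
    norm_num
  obtain ⟨g, hg⟩ := IsCyclic.exists_generator (α := (GaloisField 5 2)ˣ)
  have hgord : orderOf g = 24 := by
    rw [orderOf_eq_card_of_forall_mem_zpowers hg, Nat.card_eq_fintype_card,
      Fintype.card_units, hcard25]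
  set t : GaloisField 5 2 := ((g ^ 8 : (GaloisField 5 2)ˣ) : GaloisField 5 2) with htdef
  have hg24 : g ^ 24 = 1 := by rw [← hgord]; exact pow_orderOf_eq_one g
  have ht3 : t ^ 3 = 1 := by
    calc t ^ 3 = (((g ^ 8) ^ 3 : (GaloisField 5 2)ˣ) : GaloisField 5 2) := by
          rw [Units.val_pow_eq_pow_val]
    _ = ((g ^ 24 : (GaloisField 5 2)ˣ) : GaloisField 5 2) := by rw [← pow_mul]
    _ = 1 := by rw [hg24, Units.val_one]
  have htne1 : t ≠ 1 := by
    intro h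
    have h8 : g ^ 8 = 1 := Units.ext (by rw [Units.val_one]; exact h)
    have := orderOf_dvd_of_pow_eq_one h8
    rw [hgord] at this
    norm_num at this
  have ht : t ^ 2 = -1 - t := by
    have hfac : (t - 1) * (t ^ 2 + t + 1) = 0 := by linear_combination ht3
    rcases mul_eq_zero.mp hfac with h | h
    · exact absurd (by linear_combination h : t = 1) htne1
    · linear_combination h
  have hord3 : orderOf t = 3 := orderOf_eq_prime ht3 htne1
  have hprim : IsPrimitiveRoot t 3 :=
    ⟨ht3, fun l hl => by rw [← hord3]; exact orderOf_dvd_of_pow_eq_one hl⟩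
  have hne25 : (-1 : GaloisField 5 2) ≠ 1 := by
    intro h
    have h2 : ((2 : ℕ) : GaloisField 5 2) = 0 := by push_cast; linear_combination -h
    rw [CharP.cast_eq_zero_iff (GaloisField 5 2) 5] at h2
    norm_num at h2
  -- ### the ring homomorphisms
  let ρ₃ : Λ →+* GaloisField 3 2 :=
    { toFun := fun a => f3 s a.1
      map_one' := f3_one s
      map_mul' := fun a b => f3_mul s hs a.2 b.2
      map_zero' := f3_zero s
      map_add' := fun a b => f3_add s a.2 b.2 }
  let ρ₅ : Λ →+* GaloisField 5 2 :=
    { toFun := fun a => f5 t a.1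
      map_one' := f5_one t
      map_mul' := fun a b => f5_mul t ht a.2 b.2
      map_zero' := f5_zero t
      map_add' := fun a b => f5_add t a.2 b.2 }
  -- ### the sign homomorphisms
  let σ₃ : N1 →* Multiplicative (ZMod 2) :=
    { toFun := fun u => if (f3 s ((u : (ℍ[ℚ, -3, 5])ˣ) : ℍ[ℚ, -3, 5])) ^ 2 = 1
        then Multiplicative.ofAdd (0 : ZMod 2) else Multiplicative.ofAdd 1
      map_one' := by
        simp [f3_one s]
      map_mul' := fun u v => by
        have hu4 := f3_norm s hs (N1_val_mem u) (N1_val_norm u)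
        have hv4 := f3_norm s hs (N1_val_mem v) (N1_val_norm v)
        have hmul : f3 s (((u * v : N1) : (ℍ[ℚ, -3, 5])ˣ) : ℍ[ℚ, -3, 5]) =
            f3 s ((u : (ℍ[ℚ, -3, 5])ˣ) : ℍ[ℚ, -3, 5]) *
              f3 s ((v : (ℍ[ℚ, -3, 5])ˣ) : ℍ[ℚ, -3, 5]) :=
          f3_mul s hs (N1_val_mem u) (N1_val_mem v)
        simp only [hmul, mul_pow]
        exact sign_mul_aux hne9 (by linear_combination hu4) (by linear_combination hv4) }
  let σ₅ : N1 →* Multiplicative (ZMod 2) :=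
    { toFun := fun u => if (f5 t ((u : (ℍ[ℚ, -3, 5])ˣ) : ℍ[ℚ, -3, 5])) ^ 3 = 1
        then Multiplicative.ofAdd (0 : ZMod 2) else Multiplicative.ofAdd 1
      map_one' := by
        simp [f5_one t]
      map_mul' := fun u v => by
        have hu6 := f5_norm t ht (N1_val_mem u) (N1_val_norm u)
        have hv6 := f5_norm t ht (N1_val_mem v) (N1_val_norm v)
        have hmul : f5 t (((u * v : N1) : (ℍ[ℚ, -3, 5])ˣ) : ℍ[ℚ, -3, 5]) =
            f5 t ((u : (ℍ[ℚ, -3, 5])ˣ) : ℍ[ℚ, -3, 5]) *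
              f5 t ((v : (ℍ[ℚ, -3, 5])ˣ) : ℍ[ℚ, -3, 5]) :=
          f5_mul t ht (N1_val_mem u) (N1_val_mem v)
        simp only [hmul, mul_pow]
        exact sign_mul_aux hne25 (by linear_combination hu6) (by linear_combination hv6) }
  -- ### values of σ₃
  have hσ₃h : σ₃ nh = Multiplicative.ofAdd (0 : ZMod 2) := by
    show (if (f3 s qh) ^ 2 = 1 then Multiplicative.ofAdd (0 : ZMod 2)
      else Multiplicative.ofAdd 1) = _
    rw [f3_qh, if_pos (by norm_num)]
  have hσ₃γ : σ₃ nγ = Multiplicative.ofAdd (1 : ZMod 2) := by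
    show (if (f3 s qγ) ^ 2 = 1 then Multiplicative.ofAdd (0 : ZMod 2)
      else Multiplicative.ofAdd 1) = _
    rw [f3_qγ, hs, if_neg hne9]
  have hσ₃neg : σ₃ negOne = Multiplicative.ofAdd (0 : ZMod 2) := by
    show (if (f3 s ((((-1 : (ℍ[ℚ, -3, 5])ˣ)) : (ℍ[ℚ, -3, 5])ˣ) : ℍ[ℚ, -3, 5])) ^ 2 = 1
      then Multiplicative.ofAdd (0 : ZMod 2) else Multiplicative.ofAdd 1) = _
    have hval : (((-1 : (ℍ[ℚ, -3, 5])ˣ)) : ℍ[ℚ, -3, 5]) = -1 := by simp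
    rw [hval, f3_neg, f3_one, if_pos (by ring)]
  -- ### values of σ₅
  have h4cube : ((4 : GaloisField 5 2)) ^ 3 ≠ 1 := by
    intro h
    have h2 : ((63 : ℕ) : GaloisField 5 2) = 0 := by push_cast; linear_combination h
    rw [CharP.cast_eq_zero_iff (GaloisField 5 2) 5] at h2
    norm_num at h2
  have hσ₅h : σ₅ nh = Multiplicative.ofAdd (1 : ZMod 2) := by
    show (if (f5 t qh) ^ 3 = 1 then Multiplicative.ofAdd (0 : ZMod 2)
      else Multiplicative.ofAdd 1) = _
    rw [f5_qh, if_neg h4cube]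
  have hσ₅γ : σ₅ nγ = Multiplicative.ofAdd (1 : ZMod 2) := by
    show (if (f5 t qγ) ^ 3 = 1 then Multiplicative.ofAdd (0 : ZMod 2)
      else Multiplicative.ofAdd 1) = _
    rw [f5_qγ, if_neg (by intro h; exact hne25 (by linear_combination h))]
  have hσ₅neg : σ₅ negOne = Multiplicative.ofAdd (1 : ZMod 2) := by
    show (if (f5 t ((((-1 : (ℍ[ℚ, -3, 5])ˣ)) : (ℍ[ℚ, -3, 5])ˣ) : ℍ[ℚ, -3, 5])) ^ 3 = 1
      then Multiplicative.ofAdd (0 : ZMod 2) else Multiplicative.ofAdd 1) = _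
    have hval : (((-1 : (ℍ[ℚ, -3, 5])ˣ)) : ℍ[ℚ, -3, 5]) = -1 := by simp
    rw [hval, f5_neg, f5_one, if_neg (by intro h; exact hne25 (by linear_combination h))]
  -- ### generation of 𝔽₉ by s
  have hρ₃y : ρ₃ ⟨qy, qy_mem⟩ = s := f3_qy s
  have hadj : Algebra.adjoin (ZMod 3) ({s} : Set (GaloisField 3 2)) = ⊤ := by
    have hinj := (algebraMap (ZMod 3) (GaloisField 3 2)).injective
    have hli : LinearIndependent (ZMod 3) ![(1 : GaloisField 3 2), s] := by
      rw [LinearIndependent.pair_iff]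
      intro c d hcd
      rw [Algebra.smul_def, mul_one, Algebra.smul_def] at hcd
      by_cases hd : d = 0
      · subst hd
        rw [map_zero, zero_mul, add_zero] at hcd
        exact ⟨hinj (by rw [hcd, map_zero]), rfl⟩
      · exfalso
        have had : algebraMap (ZMod 3) (GaloisField 3 2) d ≠ 0 := fun h0 =>
          hd (hinj (by rw [h0, map_zero]))
        have hseq : s = algebraMap (ZMod 3) (GaloisField 3 2) (-c / d) := by
          rw [map_div₀, map_neg, eq_div_iff had]
          linear_combination hcd
        have he : ((-c / d : ZMod 3)) ^ 2 = -1 := by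
          apply hinj
          rw [map_pow, ← hseq, hs, map_neg, map_one]
        have : ∀ e : ZMod 3, e ^ 2 ≠ -1 := by decide
        exact this _ he
    have hspan : Submodule.span (ZMod 3) (Set.range ![(1 : GaloisField 3 2), s]) ≤
        Subalgebra.toSubmodule (Algebra.adjoin (ZMod 3) ({s} : Set (GaloisField 3 2))) := by
      rw [Submodule.span_le]
      rintro z ⟨i, rfl⟩
      fin_cases i
      · simpa using Subalgebra.one_mem (Algebra.adjoin (ZMod 3) ({s} : Set (GaloisField 3 2)))
      · simpa using Algebra.subset_adjoin (R := ZMod 3) (Set.mem_singleton s)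
    have hfr : Module.finrank (ZMod 3) (GaloisField 3 2) = 2 :=
      GaloisField.finrank 3 (by norm_num)
    have h2le : 2 ≤ Module.finrank (ZMod 3)
        (Subalgebra.toSubmodule (Algebra.adjoin (ZMod 3) ({s} : Set (GaloisField 3 2)))) := by
      have hm := Submodule.finrank_mono hspan
      rwa [finrank_span_eq_card hli, Fintype.card_fin] at hm
    have hle := Submodule.finrank_le
      (Subalgebra.toSubmodule (Algebra.adjoin (ZMod 3) ({s} : Set (GaloisField 3 2))))
    rw [hfr] at hle
    exact Algebra.toSubmodule_eq_top.mp
      (Submodule.eq_top_of_finrank_eq (by rw [hfr]; exact le_antisymm hle h2le))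
  -- ### conclusion
  refine ⟨⟨ρ₃, f3_qω s, ?_, ?_⟩, ⟨ρ₅, ?_, f5_qy t⟩,
    ⟨σ₃, hσ₃h, hσ₃γ, hσ₃neg, ?_⟩, ⟨σ₅, hσ₅h, hσ₅γ, hσ₅neg, ?_⟩⟩
  · rw [hρ₃y, hs]
  · rw [hρ₃y]; exact hadj
  · rw [show ρ₅ ⟨qω, qω_mem⟩ = t from f5_qω t]; exact hprim
  · intro hcon
    have h1 := hσ₃γ
    rw [hcon, MonoidHom.one_apply] at h1
    exact (by decide : (1 : Multiplicative (ZMod 2)) ≠ Multiplicative.ofAdd 1) h1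
  · intro hcon
    have h1 := hσ₅γ
    rw [hcon, MonoidHom.one_apply] at h1
    exact (by decide : (1 : Multiplicative (ZMod 2)) ≠ Multiplicative.ofAdd 1) h1
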